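/- Welfare dominance of the dual market over the spot-only market (benchmark step 1): Let B be the benchmark mechanism identical to the dual mechanism except every reserving agent pays the realized dual-market spot price p_s^{s+r}(q) instead of p_r (and reserving agents with value below the spot price contribute only their payment to welfare). If p_r ≥ E_{q∼Q}[p_s^{s+r}(q)] and every reserving agent weakly prefers reserving to the spot market, then E_{q∼Q}[WEL_q(dual)] ≥ E_{q∼Q}[WEL_q(B)]. -/

import Mathlib

open Finset

/-- Welfare dominance of the dual market over the spot-only market, benchmark step 1.
Supply is finitely supported (support `Qs`, nonnegative weights `wq` summing to one),
with realized dual-market spot price `ps q`.  `Reserve` is the (finite) set of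
reserving agent types, with values `value i`, utility curves `u i` (with `u i 0 = 0`)
and nonnegative masses `f i`; `N q` is the (common) welfare contribution of the
non-reserving agents at supply `q`.  In the dual mechanism a reserving agent
contributes `u i (value i − p_r) + p_r`; in the benchmark `B` she pays the spot price
instead, contributing `u i (max (value i − ps q) 0) + ps q`.  If the reservation price
weakly exceeds the expected spot price, `p_r ≥ E_q[ps q]`, and every reserving agent
weakly prefers reserving to the spot lottery, then the expected welfare of the dual
mechanism is at least that of the benchmark. -/
theorem dual_welfare_ge_benchmark
    {ι : Type*} (Reserve : Finset ι) (value : ι → ℝ) (u : ι → ℝ → ℝ) (f : ι → ℝ)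
    (Qs : Finset ℝ) (wq : ℝ → ℝ) (ps : ℝ → ℝ) (N : ℝ → ℝ) (pr : ℝ)
    (hwq : ∀ q ∈ Qs, 0 ≤ wq q) (hsum : (∑ q ∈ Qs, wq q) = 1)
    (hf : ∀ i, 0 ≤ f i)
    (hu0 : ∀ i, u i 0 = 0)
    (hpr : (∑ q ∈ Qs, wq q * ps q) ≤ pr)
    (hprefer : ∀ i ∈ Reserve,
        (∑ q ∈ Qs, wq q * u i (max (value i - ps q) 0)) ≤ u i (value i - pr)) :
    (∑ q ∈ Qs, wq q * (N q + ∑ i ∈ Reserve, f i * (u i (max (value i - ps q) 0) + ps q)))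
      ≤ ∑ q ∈ Qs, wq q * (N q + ∑ i ∈ Reserve, f i * (u i (value i - pr) + pr)) := by
  have L2 : ∀ i, (∑ q ∈ Qs, wq q * (f i * (u i (max (value i - ps q) 0) + ps q)))
      = f i * ((∑ q ∈ Qs, wq q * u i (max (value i - ps q) 0)) + (∑ q ∈ Qs, wq q * ps q)) := by
    intro i
    rw [mul_add, Finset.mul_sum, Finset.mul_sum, ← Finset.sum_add_distrib]
    exact Finset.sum_congr rfl fun q _ => by ring
  have L : (∑ q ∈ Qs, wq q * (N q + ∑ i ∈ Reserve, f i * (u i (max (value i - ps q) 0) + ps q)))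
      = (∑ q ∈ Qs, wq q * N q)
        + ∑ i ∈ Reserve, f i * ((∑ q ∈ Qs, wq q * u i (max (value i - ps q) 0))
            + (∑ q ∈ Qs, wq q * ps q)) := by
    calc (∑ q ∈ Qs, wq q * (N q + ∑ i ∈ Reserve, f i * (u i (max (value i - ps q) 0) + ps q)))
        = ∑ q ∈ Qs, (wq q * N q
            + ∑ i ∈ Reserve, wq q * (f i * (u i (max (value i - ps q) 0) + ps q))) :=
          Finset.sum_congr rfl fun q _ => by rw [mul_add, Finset.mul_sum]
      _ = (∑ q ∈ Qs, wq q * N q)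
            + ∑ q ∈ Qs, ∑ i ∈ Reserve, wq q * (f i * (u i (max (value i - ps q) 0) + ps q)) :=
          Finset.sum_add_distrib
      _ = (∑ q ∈ Qs, wq q * N q)
            + ∑ i ∈ Reserve, ∑ q ∈ Qs, wq q * (f i * (u i (max (value i - ps q) 0) + ps q)) := by
          rw [Finset.sum_comm]
      _ = _ := by rw [Finset.sum_congr rfl fun i _ => L2 i]
  have R : (∑ q ∈ Qs, wq q * (N q + ∑ i ∈ Reserve, f i * (u i (value i - pr) + pr)))
      = (∑ q ∈ Qs, wq q * N q)
        + ∑ i ∈ Reserve, f i * (u i (value i - pr) + pr) := by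
    simp only [mul_add, Finset.sum_add_distrib]
    have : (∑ q ∈ Qs, wq q * (∑ i ∈ Reserve, f i * pr)) = ∑ i ∈ Reserve, f i * pr := by
      rw [← Finset.sum_mul, hsum, one_mul]
    have h2 : (∑ q ∈ Qs, wq q * (∑ i ∈ Reserve, f i * u i (value i - pr)))
        = ∑ i ∈ Reserve, f i * u i (value i - pr) := by
      rw [← Finset.sum_mul, hsum, one_mul]
    rw [this, h2]
  rw [L, R]
  refine add_le_add le_rfl (Finset.sum_le_sum fun i hi => ?_)
  exact mul_le_mul_of_nonneg_left (add_le_add (hprefer i hi) hpr) (hf i)
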